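/- MLMC complexity theorem (Theorem 2.1, after Giles). Let (Ω,F,ℙ) be a probability space, P : Ω → ℝ an integrable random variable, and fix T > 0, M₀ ∈ ℕ₊ and set h_ℓ = T/(M₀·2^ℓ) for ℓ ∈ ℕ. Suppose one is given, for each level ℓ ∈ ℕ, integrable random variables P̂_ℓ : Ω → ℝ (the level-ℓ approximations) and, for each ℓ ∈ ℕ and each sample size N ∈ ℕ₊, square-integrable random variables Ŷ_{ℓ,N} : Ω → ℝ (the estimators) together with a cost function C : ℕ × ℕ₊ → ℝ, and positive constants α ≥ 1/2, c₁, c₂, c₃ such that: (i) |E[P̂_ℓ] − E[P]| ≤ c₁·h_ℓ^α for all ℓ; (ii) E[Ŷ_{0,N}] = E[P̂_0] and E[Ŷ_{ℓ,N}] = E[P̂_ℓ] − E[P̂_{ℓ−1}] for all ℓ ≥ 1 and all N; (iii) Var[Ŷ_{ℓ,N}] ≤ c₂·N⁻¹·h_ℓ² for all ℓ, N; (iv) C(ℓ,N) ≤ c₃·N·h_ℓ⁻¹ for all ℓ, N; and (v) for any function N : ℕ → ℕ₊ the family of random variables (Ŷ_{ℓ,N(ℓ)})_{ℓ∈ℕ}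 is independent. Then there exists a positive constant c₄ (depending only on α, c₁, c₂, c₃, T, M₀) such that for every ε with 0 < ε < 1/e there exist L ∈ ℕ and N : ℕ → ℕ₊ for which the multilevel estimator Ŷ = Σ_{ℓ=0}^{L} Ŷ_{ℓ,N(ℓ)} satisfies the mean-square-error bound E[(Ŷ − E[P])²] < ε² and the total cost bound Σ_{ℓ=0}^{L} C(ℓ,N(ℓ)) ≤ c₄·ε⁻². -/

import Mathlib

open MeasureTheory ProbabilityTheory

set_option maxHeartbeats 1000000

lemma geom_sum_le_inv' {r : ℝ} (h0 : 0 ≤ r) (h1 : r < 1) (n : ℕ) :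
    (∑ i ∈ Finset.range n, r ^ i) ≤ (1 - r)⁻¹ := by
  have h2 : 0 < 1 - r := by linarith
  have heq : (∑ i ∈ Finset.range n, r ^ i) = (1 - r ^ n) / (1 - r) := by
    rw [geom_sum_eq h1.ne n, div_eq_div_iff (by linarith) (by linarith)]
    ring
  rw [heq, ← one_div]
  apply div_le_div₀ (by norm_num) _ h2 le_rfl
  have : 0 ≤ r ^ n := pow_nonneg h0 n
  linarith

lemma mse_decomp' {Ω : Type*} [MeasureSpace Ω] [IsProbabilityMeasure (ℙ : Measure Ω)]
    (X : Ω → ℝ) (hX : MemLp X 2 ℙ) (m : ℝ) :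
    (∫ ω, (X ω - m) ^ 2 ∂ℙ) = variance X ℙ + ((∫ ω, X ω ∂ℙ) - m) ^ 2 := by
  have hXi : Integrable X ℙ := hX.integrable one_le_two
  set μ := ∫ ω, X ω ∂ℙ with hμ
  have hsub : MemLp (fun ω => X ω - μ) 2 ℙ := hX.sub (memLp_const μ)
  have hsq : Integrable (fun ω => (X ω - μ) ^ 2) ℙ := hsub.integrable_sq
  have hlin : Integrable (fun ω => 2 * (μ - m) * (X ω - μ)) ℙ :=
    ((hXi.sub (integrable_const μ)).const_mul _)
  have key : ∀ ω : Ω, (X ω - m) ^ 2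
      = (X ω - μ) ^ 2 + 2 * (μ - m) * (X ω - μ) + (μ - m) ^ 2 := fun ω => by ring
  have hint0 : ∫ ω, (X ω - μ) ∂ℙ = 0 := by
    rw [integral_sub hXi (integrable_const μ), integral_const]
    simp [hμ]
  calc (∫ ω, (X ω - m) ^ 2 ∂ℙ)
      = ∫ ω, ((X ω - μ) ^ 2 + 2 * (μ - m) * (X ω - μ) + (μ - m) ^ 2) ∂ℙ := by
        simp_rw [key]
    _ = (∫ ω, (X ω - μ) ^ 2 ∂ℙ) + (∫ ω, 2 * (μ - m) * (X ω - μ) ∂ℙ)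
        + (μ - m) ^ 2 := by
        have haux : Integrable (fun ω => (X ω - μ) ^ 2 + 2 * (μ - m) * (X ω - μ)) ℙ :=
          hsq.add hlin
        rw [integral_add haux (integrable_const _), integral_add hsq hlin,
          integral_const, probReal_univ, smul_eq_mul, one_mul]
    _ = variance X ℙ + (μ - m) ^ 2 := by
        rw [integral_const_mul, hint0, mul_zero, add_zero, variance_eq_integral hX.1.aemeasurable]



/-- MLMC complexity theorem (Theorem 2.1, after Giles). Under the bias,
consistency, variance and cost assumptions (i)–(iv) and independence of the
level estimators (v), there is a constant `c₄ > 0` such that for every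
`0 < ε < 1/e` a number of levels `L` and sample sizes `N_ℓ` can be chosen so
that the multilevel estimator `Ŷ = Σ_{ℓ=0}^L Ŷ_{ℓ,N_ℓ}` has mean-square error
below `ε²` at total cost at most `c₄·ε⁻²`. -/
theorem mlmc_complexity {Ω : Type*} [MeasureSpace Ω]
    [IsProbabilityMeasure (ℙ : Measure Ω)]
    (P : Ω → ℝ) (hP : Integrable P ℙ)
    (T : ℝ) (hT : 0 < T) (M₀ : ℕ+)
    (h : ℕ → ℝ) (hstep : ∀ ℓ : ℕ, h ℓ = T / ((M₀ : ℕ) * 2 ^ ℓ : ℕ))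
    (Phat : ℕ → Ω → ℝ) (hPhat : ∀ ℓ : ℕ, Integrable (Phat ℓ) ℙ)
    (Yhat : ℕ → ℕ+ → Ω → ℝ) (hYhat : ∀ (ℓ : ℕ) (N : ℕ+), MemLp (Yhat ℓ N) 2 ℙ)
    (C : ℕ → ℕ+ → ℝ)
    (α c₁ c₂ c₃ : ℝ) (hα : 1 / 2 ≤ α) (hc₁ : 0 < c₁) (hc₂ : 0 < c₂) (hc₃ : 0 < c₃)
    -- (i) bias
    (hbias : ∀ ℓ : ℕ, |(∫ ω, Phat ℓ ω) - ∫ ω, P ω| ≤ c₁ * h ℓ ^ α)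
    -- (ii) consistency of the estimators
    (hmean0 : ∀ N : ℕ+, (∫ ω, Yhat 0 N ω) = ∫ ω, Phat 0 ω)
    (hmean : ∀ ℓ : ℕ, 1 ≤ ℓ → ∀ N : ℕ+,
      (∫ ω, Yhat ℓ N ω) = (∫ ω, Phat ℓ ω) - ∫ ω, Phat (ℓ - 1) ω)
    -- (iii) variance decay
    (hvar : ∀ (ℓ : ℕ) (N : ℕ+),
      variance (Yhat ℓ N) ℙ ≤ c₂ * ((N : ℕ) : ℝ)⁻¹ * h ℓ ^ 2)
    -- (iv) cost bound
    (hcost : ∀ (ℓ : ℕ) (N : ℕ+), C ℓ N ≤ c₃ * ((N : ℕ) : ℝ) * (h ℓ)⁻¹)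
    -- (v) independence across levels
    (hindep : ∀ N : ℕ → ℕ+,
      iIndepFun
        (fun ℓ : ℕ => Yhat ℓ (N ℓ)) ℙ) :
    ∃ c₄ : ℝ, 0 < c₄ ∧ ∀ ε : ℝ, 0 < ε → ε < 1 / Real.exp 1 →
      ∃ (L : ℕ) (N : ℕ → ℕ+),
        (∫ ω, ((∑ ℓ ∈ Finset.range (L + 1), Yhat ℓ (N ℓ) ω) - ∫ ω', P ω') ^ 2)
            < ε ^ 2 ∧
        (∑ ℓ ∈ Finset.range (L + 1), C ℓ (N ℓ)) ≤ c₄ * ε⁻¹ ^ 2 := by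
    classical
  -- basic facts on step sizes
  have h0pos : 0 < h 0 := by
    rw [hstep]; exact div_pos hT (by exact_mod_cast Nat.pos_of_ne_zero (by positivity))
  have hposl : ∀ ℓ, 0 < h ℓ := by
    intro ℓ
    rw [hstep]; exact div_pos hT (by exact_mod_cast Nat.pos_of_ne_zero (by positivity))
  have h2exp : ∀ ℓ : ℕ, h ℓ = h 0 * ((2:ℝ) ^ ℓ)⁻¹ := by
    intro ℓ
    rw [hstep, hstep]
    push_cast
    field_simp
  -- constants
  set A : ℝ := 2 * c₁ * h 0 ^ α + 1 with hA_def
  set B : ℝ := A ^ 2 with hB_def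
  set K : ℝ := 8 * c₂ * h 0 ^ 2 with hK_def
  have hrpow0 : 0 ≤ h 0 ^ α := Real.rpow_nonneg h0pos.le α
  have hA1 : 1 ≤ A := by nlinarith
  have hApos : 0 < A := by linarith
  have hB1 : 1 ≤ B := by nlinarith
  have hBpos : 0 < B := by linarith
  have hKpos : 0 < K := by positivity
  refine ⟨c₃ / h 0 * (3 * K + 4 * B + 4), by positivity, ?_⟩
  intro ε hε hεe
  have hexp1 : (1:ℝ) < Real.exp 1 := by
    have := Real.add_one_le_exp 1; linarith
  have hε1 : ε < 1 := lt_trans hεe (by rw [div_lt_one (Real.exp_pos 1)]; exact hexp1)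
  have hε2pos : 0 < ε ^ 2 := by positivity
  have hε21 : ε ^ 2 < 1 := by nlinarith
  -- choice of L and N
  set n : ℕ := ⌈B / ε ^ 2⌉₊ with hn_def
  set L : ℕ := Nat.clog 2 n with hL_def
  have hNpos : ∀ ℓ : ℕ, 0 < ⌈K / (ε ^ 2 * 3 ^ ℓ)⌉₊ :=
    fun ℓ => Nat.ceil_pos.mpr (div_pos hKpos (by positivity))
  set N : ℕ → ℕ+ := fun ℓ => ⟨⌈K / (ε ^ 2 * 3 ^ ℓ)⌉₊, hNpos ℓ⟩ with hN_def
  have hNval : ∀ ℓ : ℕ, ((N ℓ : ℕ) : ℝ) = (⌈K / (ε ^ 2 * 3 ^ ℓ)⌉₊ : ℝ) := fun ℓ => rfl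
  -- bounds on 2 ^ L
  have hn1 : 1 < n := by
    rw [hn_def, Nat.lt_ceil]
    push_cast
    rw [lt_div_iff₀ hε2pos]
    nlinarith
  have hBn : B / ε ^ 2 ≤ (2:ℝ) ^ L := by
    have h1 : (n : ℝ) ≤ ((2 ^ L : ℕ) : ℝ) := by
      exact_mod_cast Nat.le_pow_clog one_lt_two n
    have h2 : B / ε ^ 2 ≤ (n : ℝ) := Nat.le_ceil _
    push_cast at h1
    linarith
  have h2L : (2:ℝ) ^ (L + 1) ≤ (4 * B + 4) / ε ^ 2 := by
    have hL1 : 1 ≤ L := Nat.clog_pos one_lt_two hn1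
    have hlt : 2 ^ (L - 1) < n := Nat.pow_pred_clog_lt_self one_lt_two hn1
    have h2Ln : (2:ℝ) ^ L < 2 * n := by
      have : 2 ^ L ≤ 2 * 2 ^ (L - 1) := by
        rw [← pow_succ']
        exact Nat.pow_le_pow_right (by norm_num) (by omega)
      have h3 : (2:ℕ) ^ L < 2 * n := by omega
      exact_mod_cast h3
    have hnlt : (n : ℝ) < B / ε ^ 2 + 1 := Nat.ceil_lt_add_one (by positivity)
    have h4 : (1:ℝ) ≤ 1 / ε ^ 2 := by
      rw [le_div_iff₀ hε2pos]; linarith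
    have he : (4 * B + 4) / ε ^ 2 = 4 * (B / ε ^ 2) + 4 * (1 / ε ^ 2) := by ring
    have hp : (2:ℝ) ^ (L + 1) = 2 * 2 ^ L := by ring
    rw [hp, he]
    linarith
  -- bias bound at level L
  have hα0 : (0:ℝ) ≤ α := by linarith
  have hhL : h L ≤ h 0 * ε ^ 2 / B := by
    rw [h2exp L]
    have h1 : ((2:ℝ) ^ L)⁻¹ ≤ (B / ε ^ 2)⁻¹ :=
      inv_anti₀ (div_pos hBpos hε2pos) hBn
    rw [inv_div] at h1
    calc h 0 * ((2:ℝ) ^ L)⁻¹ ≤ h 0 * (ε ^ 2 / B) :=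
          mul_le_mul_of_nonneg_left h1 h0pos.le
      _ = h 0 * ε ^ 2 / B := by ring
  have hLpow : h L ^ α ≤ (h 0 * ε ^ 2 / B) ^ α :=
    Real.rpow_le_rpow (hposl L).le hhL hα0
  have hsplit : (h 0 * ε ^ 2 / B) ^ α = h 0 ^ α * (ε ^ 2) ^ α / B ^ α := by
    rw [Real.div_rpow (by positivity) hBpos.le, Real.mul_rpow h0pos.le (sq_nonneg ε)]
  have heps : (ε ^ 2 : ℝ) ^ α ≤ ε := by
    have h1 : (ε ^ 2 : ℝ) ^ α ≤ (ε ^ 2 : ℝ) ^ ((1:ℝ)/2) :=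
      Real.rpow_le_rpow_of_exponent_ge hε2pos hε21.le hα
    have h2 : (ε ^ 2 : ℝ) ^ ((1:ℝ)/2) = ε := by
      rw [show (1:ℝ)/2 = (((2:ℕ):ℝ))⁻¹ by norm_num]
      exact Real.pow_rpow_inv_natCast hε.le two_ne_zero
    linarith
  have hBpow : A ≤ B ^ α := by
    have h1 : B ^ ((1:ℝ)/2) ≤ B ^ α := Real.rpow_le_rpow_of_exponent_le hB1 hα
    have h2 : B ^ ((1:ℝ)/2) = A := by
      rw [hB_def, show (1:ℝ)/2 = (((2:ℕ):ℝ))⁻¹ by norm_num]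
      exact Real.pow_rpow_inv_natCast hApos.le two_ne_zero
    linarith
  have hbias2 : c₁ * h L ^ α ≤ ε / 2 := by
    have h1 : h L ^ α ≤ h 0 ^ α * ε / A := by
      calc h L ^ α ≤ h 0 ^ α * (ε ^ 2) ^ α / B ^ α := by rw [← hsplit]; exact hLpow
        _ ≤ h 0 ^ α * ε / A := by
            apply div_le_div₀ (by positivity) ?_ hApos hBpow
            exact mul_le_mul_of_nonneg_left heps hrpow0
    calc c₁ * h L ^ α ≤ c₁ * (h 0 ^ α * ε / A) :=
          mul_le_mul_of_nonneg_left h1 hc₁.le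
      _ = c₁ * h 0 ^ α * ε / A := by ring
      _ ≤ ε / 2 := by
          rw [div_le_div_iff₀ hApos two_pos]
          nlinarith
  -- telescoping means
  have htel : ∀ M : ℕ, (∑ ℓ ∈ Finset.range (M+1), ∫ ω, Yhat ℓ (N ℓ) ω)
      = ∫ ω, Phat M ω := by
    intro M
    induction M with
    | zero => simpa using hmean0 (N 0)
    | succ M ih =>
      rw [Finset.sum_range_succ, ih, hmean (M+1) (by omega) (N (M+1))]
      simp
  refine ⟨L, N, ?_, ?_⟩
  · -- mean-square error
    have hfun : (fun ω => ∑ ℓ ∈ Finset.range (L+1), Yhat ℓ (N ℓ) ω)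
        = ∑ ℓ ∈ Finset.range (L+1), Yhat ℓ (N ℓ) := by
      funext ω; simp
    have hSmem : MemLp (fun ω => ∑ ℓ ∈ Finset.range (L+1), Yhat ℓ (N ℓ) ω) 2 ℙ := by
      rw [hfun]; exact memLp_finset_sum' _ (fun ℓ _ => hYhat ℓ (N ℓ))
    have hmse := mse_decomp' _ hSmem (∫ ω', P ω')
    rw [hmse]
    have hvarsum : variance (fun ω => ∑ ℓ ∈ Finset.range (L+1), Yhat ℓ (N ℓ) ω) ℙ
        = ∑ ℓ ∈ Finset.range (L+1), variance (Yhat ℓ (N ℓ)) ℙ := by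
      rw [hfun]
      exact IndepFun.variance_sum (fun ℓ _ => hYhat ℓ (N ℓ))
        (fun i _ j _ hij => (hindep N).indepFun hij)
    have hvb : (∑ ℓ ∈ Finset.range (L+1), variance (Yhat ℓ (N ℓ)) ℙ) ≤ ε ^ 2 / 2 := by
      have hterm : ∀ ℓ ∈ Finset.range (L+1),
          variance (Yhat ℓ (N ℓ)) ℙ ≤ ε ^ 2 / 8 * (3/4 : ℝ) ^ ℓ := by
        intro ℓ _
        have h3pos : (0:ℝ) < ε ^ 2 * 3 ^ ℓ := by positivity
        have hNl : K / (ε ^ 2 * 3 ^ ℓ) ≤ ((N ℓ : ℕ) : ℝ) := by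
          rw [hNval]; exact Nat.le_ceil _
        have hNinv : ((N ℓ : ℕ) : ℝ)⁻¹ ≤ ε ^ 2 * 3 ^ ℓ / K := by
          have h5 := inv_anti₀ (div_pos hKpos h3pos) hNl
          rwa [inv_div] at h5
        calc variance (Yhat ℓ (N ℓ)) ℙ
            ≤ c₂ * ((N ℓ : ℕ) : ℝ)⁻¹ * h ℓ ^ 2 := hvar ℓ (N ℓ)
          _ ≤ c₂ * (ε ^ 2 * 3 ^ ℓ / K) * h ℓ ^ 2 := by
              apply mul_le_mul_of_nonneg_right _ (sq_nonneg _)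
              exact mul_le_mul_of_nonneg_left hNinv hc₂.le
          _ = ε ^ 2 / 8 * (3/4 : ℝ) ^ ℓ := by
              rw [h2exp ℓ, hK_def]
              have h4 : (((2:ℝ) ^ ℓ)⁻¹) ^ 2 = ((4:ℝ) ^ ℓ)⁻¹ := by
                rw [inv_pow, ← pow_mul, mul_comm ℓ 2, pow_mul]; norm_num
              rw [mul_pow, h4, div_pow]
              have h40 : ((4:ℝ) ^ ℓ) ≠ 0 := by positivity
              have h30 : ((3:ℝ) ^ ℓ) ≠ 0 := by positivity
              field_simp
      calc (∑ ℓ ∈ Finset.range (L+1), variance (Yhat ℓ (N ℓ)) ℙ)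
          ≤ ∑ ℓ ∈ Finset.range (L+1), ε ^ 2 / 8 * (3/4 : ℝ) ^ ℓ :=
            Finset.sum_le_sum hterm
        _ = ε ^ 2 / 8 * ∑ ℓ ∈ Finset.range (L+1), (3/4 : ℝ) ^ ℓ := by
            rw [Finset.mul_sum]
        _ ≤ ε ^ 2 / 8 * (1 - 3/4 : ℝ)⁻¹ := by
            exact mul_le_mul_of_nonneg_left
              (geom_sum_le_inv' (by norm_num) (by norm_num) _) (by positivity)
        _ = ε ^ 2 / 2 := by norm_num; ring
    have hES : (∫ ω, ∑ ℓ ∈ Finset.range (L+1), Yhat ℓ (N ℓ) ω) = ∫ ω, Phat L ω := by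
      rw [integral_finset_sum _ (fun ℓ _ => (hYhat ℓ (N ℓ)).integrable one_le_two)]
      exact htel L
    have hb2 : ((∫ ω, ∑ ℓ ∈ Finset.range (L+1), Yhat ℓ (N ℓ) ω) - ∫ ω', P ω') ^ 2
        ≤ (ε/2) ^ 2 := by
      rw [hES]
      have h2 : |(∫ ω, Phat L ω) - ∫ ω', P ω'| ≤ ε/2 := le_trans (hbias L) hbias2
      calc ((∫ ω, Phat L ω) - ∫ ω', P ω') ^ 2
          = |(∫ ω, Phat L ω) - ∫ ω', P ω'| ^ 2 := (sq_abs _).symm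
        _ ≤ (ε/2) ^ 2 := pow_le_pow_left₀ (abs_nonneg _) h2 2
    have he4 : (ε/2:ℝ) ^ 2 = ε ^ 2 / 4 := by ring
    rw [hvarsum]
    linarith [hvb, hb2, hε2pos]
  · -- cost
    have hch : (0:ℝ) < c₃ / h 0 := div_pos hc₃ h0pos
    calc (∑ ℓ ∈ Finset.range (L+1), C ℓ (N ℓ))
        ≤ ∑ ℓ ∈ Finset.range (L+1), c₃ * ((N ℓ : ℕ):ℝ) * (h ℓ)⁻¹ :=
          Finset.sum_le_sum (fun ℓ _ => hcost ℓ (N ℓ))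
      _ ≤ ∑ ℓ ∈ Finset.range (L+1),
            (c₃ / h 0 * (K / ε ^ 2) * (2/3:ℝ) ^ ℓ + c₃ / h 0 * (2:ℝ) ^ ℓ) := by
          apply Finset.sum_le_sum
          intro ℓ _
          have hinv : (h ℓ)⁻¹ = (2:ℝ) ^ ℓ / h 0 := by
            rw [h2exp ℓ, mul_inv, inv_inv]; ring
          have hNup : ((N ℓ : ℕ):ℝ) ≤ K / (ε ^ 2 * 3 ^ ℓ) + 1 := by
            rw [hNval]
            exact (Nat.ceil_lt_add_one (le_of_lt (div_pos hKpos (by positivity)))).le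
          calc c₃ * ((N ℓ : ℕ):ℝ) * (h ℓ)⁻¹
              ≤ c₃ * (K / (ε ^ 2 * 3 ^ ℓ) + 1) * (h ℓ)⁻¹ := by
                apply mul_le_mul_of_nonneg_right _ (inv_nonneg.mpr (hposl ℓ).le)
                exact mul_le_mul_of_nonneg_left hNup hc₃.le
            _ = c₃ / h 0 * (K / ε ^ 2) * (2/3:ℝ) ^ ℓ + c₃ / h 0 * (2:ℝ) ^ ℓ := by
                rw [hinv, div_pow]
                have h30 : ((3:ℝ) ^ ℓ) ≠ 0 := by positivity
                have h20 : ((2:ℝ) ^ ℓ) ≠ 0 := by positivity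
                field_simp
      _ = c₃ / h 0 * (K / ε ^ 2) * (∑ ℓ ∈ Finset.range (L+1), (2/3:ℝ) ^ ℓ)
          + c₃ / h 0 * (∑ ℓ ∈ Finset.range (L+1), (2:ℝ) ^ ℓ) := by
          rw [Finset.sum_add_distrib, Finset.mul_sum, Finset.mul_sum]
      _ ≤ c₃ / h 0 * (K / ε ^ 2) * 3 + c₃ / h 0 * ((4 * B + 4) / ε ^ 2) := by
          apply add_le_add
          · apply mul_le_mul_of_nonneg_left _
              (le_of_lt (mul_pos hch (div_pos hKpos hε2pos)))
            have h6 := geom_sum_le_inv' (show (0:ℝ) ≤ 2/3 by norm_num)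
              (show (2/3:ℝ) < 1 by norm_num) (L+1)
            norm_num at h6
            exact h6
          · apply mul_le_mul_of_nonneg_left _ hch.le
            have hgeq : (∑ ℓ ∈ Finset.range (L+1), (2:ℝ) ^ ℓ) = 2 ^ (L+1) - 1 := by
              rw [geom_sum_eq (by norm_num)]
              norm_num
            rw [hgeq]
            linarith [h2L]
      _ = c₃ / h 0 * (3 * K + 4 * B + 4) * ε⁻¹ ^ 2 := by
          rw [inv_pow]
          ring
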